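/- Let K be a field and R a (possibly non-unital) associative K-algebra. If R satisfies a nonmatrix identity — i.e., there is a nonzero element f of the free associative algebra K⟨X₁,…,Xₙ⟩ with zero constant term such that every evaluation of f at elements of R (performed inside the unitization of R) is 0, while f is not a polynomial identity of M₂(K) — then the unital hull of R (the unitization K ⊕ R) satisfies a nonmatrix identity. -/
import Mathlib

lemma lift_lift {K : Type*} [CommSemiring K] {n m : ℕ}
    (φ : Fin n → FreeAlgebra K (Fin m)) {A : Type*} [Semiring A] [Algebra K A]
    (v : Fin m → A) (f : FreeAlgebra K (Fin n)) :
    FreeAlgebra.lift K v (FreeAlgebra.lift K φ f)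
      = FreeAlgebra.lift K (fun i => FreeAlgebra.lift K v (φ i)) f := by
  have h : (FreeAlgebra.lift K v).comp (FreeAlgebra.lift K φ)
      = FreeAlgebra.lift K (fun i => FreeAlgebra.lift K v (φ i)) := by
    apply FreeAlgebra.hom_ext
    funext i
    simp
  exact DFunLike.congr_fun h f

lemma eq_inr_of_fst_eq_zero {K : Type*} [Field K] {R : Type*}
    [NonUnitalRing R] [Module K R] [SMulCommClass K R R] [IsScalarTower K R R]
    (x : Unitization K R) (hx : x.fst = 0) : x = Unitization.inr x.snd := by
  conv_lhs => rw [← Unitization.inl_fst_add_inr_snd_eq x]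
  rw [hx, Unitization.inl_zero, zero_add]


/-- `f` is a polynomial identity of the `K`-algebra `R`. -/
def IsPolyIdOf (K : Type*) [Field K] (R : Type*) [Ring R] [Algebra K R]
    {n : ℕ} (f : FreeAlgebra K (Fin n)) : Prop :=
  ∀ v : Fin n → R, FreeAlgebra.lift K v f = 0

/-- `R` satisfies a nonmatrix identity over `K`. -/
def SatisfiesNonmatrixIdentity (K : Type*) [Field K] (R : Type*) [Ring R] [Algebra K R] : Prop :=
  ∃ (n : ℕ) (f : FreeAlgebra K (Fin n)), f ≠ 0 ∧ IsPolyIdOf K R f ∧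
    ¬ IsPolyIdOf K (Matrix (Fin 2) (Fin 2) K) f

/-- Proposition 3.1(i): if a (possibly non-unital) associative `K`-algebra `R` satisfies
a nonmatrix identity (a nonzero polynomial with zero constant term, not an identity of
`M₂(K)`, all of whose evaluations at elements of `R` — performed inside the unitization
`K ⊕ R` — vanish), then the unital hull `Unitization K R` satisfies a nonmatrix
identity. -/
theorem unitization_satisfies_nonmatrix (K : Type*) [Field K] (R : Type*)
    [NonUnitalRing R] [Module K R] [SMulCommClass K R R] [IsScalarTower K R R]
    (h : ∃ (n : ℕ) (f : FreeAlgebra K (Fin n)), f ≠ 0 ∧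
      FreeAlgebra.lift K (fun _ : Fin n => (0 : K)) f = 0 ∧
      (∀ v : Fin n → R,
        FreeAlgebra.lift K (fun i => (Unitization.inr (v i) : Unitization K R)) f = 0) ∧
      ¬ IsPolyIdOf K (Matrix (Fin 2) (Fin 2) K) f) :
    SatisfiesNonmatrixIdentity K (Unitization K R) := by
  obtain ⟨n, f, hf0, -, hR, hM⟩ := h
  -- indices
  set i₀ : Fin (n + 2) := ⟨n, by omega⟩ with hi₀
  set i₁ : Fin (n + 2) := ⟨n + 1, by omega⟩ with hi₁
  set e : Fin n → Fin (n + 2) := fun i => ⟨i.1, by omega⟩ with he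
  set φ : Fin n → FreeAlgebra K (Fin (n + 2)) := fun i =>
    (FreeAlgebra.ι K i₀ * FreeAlgebra.ι K i₁ - FreeAlgebra.ι K i₁ * FreeAlgebra.ι K i₀) *
      FreeAlgebra.ι K (e i) with hφ
  set g : FreeAlgebra K (Fin (n + 2)) := FreeAlgebra.lift K φ f with hg
  -- g is not a polynomial identity of M₂(K)
  have hMg : ¬ IsPolyIdOf K (Matrix (Fin 2) (Fin 2) K) g := by
    rw [IsPolyIdOf] at hM
    push_neg at hM
    obtain ⟨a, ha⟩ := hM
    intro hid
    set C : Matrix (Fin 2) (Fin 2) K := !![1, 0; 0, -1] with hC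
    set v : Fin (n + 2) → Matrix (Fin 2) (Fin 2) K := fun j =>
      if hj : (j : ℕ) < n then C * a ⟨j, hj⟩
      else if (j : ℕ) = n then !![0, 1; 0, 0] else !![0, 0; 1, 0] with hv
    have key : FreeAlgebra.lift K v g = FreeAlgebra.lift K a f := by
      rw [hg, lift_lift]
      have heq : (fun i => FreeAlgebra.lift K v (φ i)) = a := by
        funext i
        have h0 : v i₀ = !![0, 1; 0, 0] := by simp [hv, hi₀]
        have h1 : v i₁ = !![0, 0; 1, 0] := by simp [hv, hi₁]
        have h2 : v (e i) = C * a i := by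
          simp only [hv, he]
          rw [dif_pos i.2]
        simp only [hφ, map_mul, map_sub, FreeAlgebra.lift_ι_apply, h0, h1, h2]
        have hcomm : (!![0, 1; 0, 0] * !![0, 0; 1, 0] - !![0, 0; 1, 0] * !![0, 1; 0, 0] : Matrix (Fin 2) (Fin 2) K) = C := by
          rw [hC]
          ext i j
          fin_cases i <;> fin_cases j <;>
            norm_num [Matrix.mul_apply, Fin.sum_univ_two]
        rw [hcomm, ← mul_assoc]
        have hC2 : C * C = 1 := by
          rw [hC]
          ext i j
          fin_cases i <;> fin_cases j <;>
            norm_num [Matrix.mul_apply, Fin.sum_univ_two, Matrix.one_apply]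
        rw [hC2, one_mul]
      rw [heq]
    exact ha (key ▸ hid v)
  -- g is a polynomial identity of the unitization
  have hUg : IsPolyIdOf K (Unitization K R) g := by
    intro v
    rw [hg, lift_lift]
    have hw : ∀ i : Fin n,
        FreeAlgebra.lift K v (φ i)
          = Unitization.inr ((FreeAlgebra.lift K v (φ i)).snd) := by
      intro i
      apply eq_inr_of_fst_eq_zero
      have hfsub : ∀ x y : Unitization K R, (x - y).fst = x.fst - y.fst := fun _ _ => rfl
      simp only [hφ, map_mul, map_sub, FreeAlgebra.lift_ι_apply,
        Unitization.fst_mul, hfsub]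
      ring
    calc FreeAlgebra.lift K (fun i => FreeAlgebra.lift K v (φ i)) f
        = FreeAlgebra.lift K
            (fun i => (Unitization.inr ((FreeAlgebra.lift K v (φ i)).snd) : Unitization K R)) f := by
          rw [funext hw]
      _ = 0 := hR _
  have hg0 : g ≠ 0 := by
    intro hzero
    apply hMg
    intro v
    rw [hzero, map_zero]
  exact ⟨n + 2, g, hg0, hUg, hMg⟩
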